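/- Let T be the operator (Tf)(x) = f(1/(2−x))/(2−x)² − f(1/(1+x))/(1+x)² and T_+ the operator (T_+f)(x) = f(1/(2−x))/(2−x)² + f(1/(1+x))/(1+x)² on C[1/2,1]. Let ψ_n = (T_+)^n 1 (with ψ_0 ≡ 1). Then for every n ≥ 1 and x ∈ [1/2,1]: ψ_n(x) = Σ_{p/q ∈ W_n} ( 1/(q−px)² + 1/(q−p(1−x))² ), where W_n is the n-th layer of new Stern-Brocot fractions in lowest terms. -/

import Mathlib

/-- The mediant of two rationals, formed from numerators and denominators
of the reduced fractions. -/
def mediant (a b : ℚ) : ℚ := ((a.num + b.num : ℤ) : ℚ) / ((a.den + b.den : ℕ) : ℚ)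

/-- `sb n j` is the `j`-th element `ξ_{j,n}` of the Stern–Brocot sequence `F_n`:
`F_0 = {0/1, 1/1}` and `F_{n+1}` is obtained from `F_n` by inserting the mediant
between every pair of consecutive elements. -/
def sb : ℕ → ℕ → ℚ
  | 0, j => if j = 0 then 0 else 1
  | n + 1, j => if j % 2 = 0 then sb n (j / 2) else mediant (sb n (j / 2)) (sb n (j / 2 + 1))

/-- `sbNew n` is the set `W_n` of new fractions inserted at step `n` of the
Stern–Brocot construction (the elements of odd index in `F_n`). -/
def sbNew (n : ℕ) : Finset ℚ :=
  ((Finset.range (2 ^ n)).filter (fun j => j % 2 = 1)).image (sb n)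

/-- The operator `T₊` on functions on `[1/2,1]`:
`(T₊f)(x) = f(1/(2−x))/(2−x)² + f(1/(1+x))/(1+x)²`. -/
noncomputable def Tplus (f : ℝ → ℝ) : ℝ → ℝ := fun x =>
  f (1 / (2 - x)) / (2 - x) ^ 2 + f (1 / (1 + x)) / (1 + x) ^ 2



lemma num_nonneg_of_nonneg {r : ℚ} (h : 0 ≤ r) : 0 ≤ r.num := Rat.num_nonneg.mpr h

lemma num_le_den_of_le_one {r : ℚ} (h : r ≤ 1) : r.num ≤ (r.den : ℤ) := by
  have hd : (0:ℚ) < (r.den : ℚ) := by exact_mod_cast r.pos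
  have h2 : (r.num : ℚ) / (r.den : ℚ) ≤ 1 := by rw [Rat.num_div_den]; exact h
  have h3 : (r.num : ℚ) ≤ (r.den : ℚ) := (div_le_one hd).mp h2
  exact_mod_cast h3

lemma mediant_nonneg {a b : ℚ} (ha : 0 ≤ a) (hb : 0 ≤ b) : 0 ≤ mediant a b := by
  unfold mediant
  have h1 := num_nonneg_of_nonneg ha
  have h2 := num_nonneg_of_nonneg hb
  have : (0:ℚ) ≤ ((a.num + b.num : ℤ) : ℚ) := by exact_mod_cast add_nonneg h1 h2
  positivity

lemma mediant_le_one {a b : ℚ} (ha : a ≤ 1) (hb : b ≤ 1) : mediant a b ≤ 1 := by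
  unfold mediant
  have h1 := num_le_den_of_le_one ha
  have h2 := num_le_den_of_le_one hb
  rw [div_le_one (by positivity)]
  push_cast
  have := add_le_add h1 h2
  exact_mod_cast this

lemma sb_bounds : ∀ n j, 0 ≤ sb n j ∧ sb n j ≤ 1 := by
  intro n
  induction n with
  | zero => intro j; by_cases h : j = 0 <;> simp [sb, h]
  | succ n ih =>
    intro j
    by_cases h : j % 2 = 0
    · simp only [sb, h, if_true]; exact ih _
    · simp only [sb, h, if_false]
      exact ⟨mediant_nonneg (ih _).1 (ih _).1, mediant_le_one (ih _).2 (ih _).2⟩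

lemma sb_zero (n : ℕ) : sb n 0 = 0 := by
  induction n with
  | zero => decide
  | succ n ih => simpa [sb] using ih

lemma sb_top (n : ℕ) : sb n (2^n) = 1 := by
  induction n with
  | zero => decide
  | succ n ih =>
    have : 2^(n+1) = 2 * 2^n := by ring
    rw [this]
    have h0 : (2 * 2^n) % 2 = 0 := by omega
    have h1 : (2 * 2^n) / 2 = 2^n := by omega
    simpa [sb, h0, h1] using ih

def phiF (r : ℚ) : ℚ := 1 / (2 - r)
def phiG (r : ℚ) : ℚ := r / (1 + r)

lemma sb_succ_even (n k : ℕ) : sb (n+1) (2*k) = sb n k := by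
  simp [sb, Nat.mul_mod_right, Nat.mul_div_cancel_left _ (by norm_num : 0 < 2)]

lemma sb_succ_odd (n k : ℕ) : sb (n+1) (2*k+1) = mediant (sb n k) (sb n (k+1)) := by
  have h1 : (2*k+1) % 2 = 1 := by omega
  have h2 : (2*k+1) / 2 = k := by omega
  simp [sb, h1, h2]

lemma mediant_eq_div (a b : ℚ) :
    mediant a b = ((a.num + b.num : ℤ) : ℚ) / ((a.den + b.den : ℕ) : ℚ) := rfl

lemma mediant_num_den {a b : ℚ} (h : b.num * a.den - a.num * b.den = 1) :
    (mediant a b).num = a.num + b.num ∧ ((mediant a b).den : ℤ) = a.den + b.den := by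
  have hd : (0:ℤ) < (a.den : ℤ) + (b.den : ℤ) := by positivity
  have hcop : IsCoprime ((a.num + b.num : ℤ)) ((a.den : ℤ) + (b.den : ℤ)) := by
    refine ⟨-(b.den : ℤ), b.num, ?_⟩
    linear_combination h
  have hcop' : Nat.Coprime (a.num + b.num).natAbs ((a.den : ℤ) + (b.den : ℤ)).natAbs :=
    Int.isCoprime_iff_gcd_eq_one.mp hcop
  have hdc : (((a.den + b.den : ℕ) : ℤ) : ℚ) = ((a.den : ℤ) + (b.den : ℤ) : ℤ) := by push_cast; ring
  constructor
  · rw [mediant_eq_div]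
    have := Rat.num_div_eq_of_coprime hd hcop'
    rw [show ((a.den + b.den : ℕ) : ℚ) = (((a.den:ℤ) + (b.den:ℤ) : ℤ) : ℚ) by push_cast; ring]
    exact this
  · rw [mediant_eq_div]
    have := Rat.den_div_eq_of_coprime hd hcop'
    rw [show ((a.den + b.den : ℕ) : ℚ) = (((a.den:ℤ) + (b.den:ℤ) : ℤ) : ℚ) by push_cast; ring]
    exact this

lemma sb_unimod : ∀ n j, j < 2^n →
    (sb n (j+1)).num * (sb n j).den - (sb n j).num * (sb n (j+1)).den = 1 := by
  intro n
  induction n with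
  | zero => intro j hj; interval_cases j; decide
  | succ n ih =>
    intro j hj
    rcases Nat.even_or_odd j with ⟨k, hk⟩ | ⟨k, hk⟩
    · subst hk
      have hk2 : k < 2^n := by rw [pow_succ] at hj; omega
      have h := ih k hk2
      rw [show k + k = 2*k by ring, show 2*k+1 = 2*k+1 from rfl, sb_succ_even, sb_succ_odd]
      obtain ⟨hn, hd⟩ := mediant_num_den h
      rw [hn]
      have : ((mediant (sb n k) (sb n (k+1))).den : ℤ) = (sb n k).den + (sb n (k+1)).den := hd
      rw [this]
      linear_combination h
    · subst hk
      have hk2 : k < 2^n := by rw [pow_succ] at hj; omega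
      have h := ih k hk2
      rw [show 2*k+1+1 = 2*(k+1) by ring, sb_succ_even, sb_succ_odd]
      obtain ⟨hn, hd⟩ := mediant_num_den h
      rw [hn, hd]
      linear_combination h

lemma sb_lt_succ (n j : ℕ) (hj : j < 2^n) : sb n j < sb n (j+1) := by
  have h := sb_unimod n j hj
  have ha : (0:ℚ) < ((sb n j).den : ℚ) := by exact_mod_cast (sb n j).pos
  have hb : (0:ℚ) < ((sb n (j+1)).den : ℚ) := by exact_mod_cast (sb n (j+1)).pos
  rw [← Rat.num_div_den (sb n j), ← Rat.num_div_den (sb n (j+1)), div_lt_div_iff₀ ha hb]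
  have : (sb n j).num * ((sb n (j+1)).den : ℤ) < (sb n (j+1)).num * ((sb n j).den : ℤ) := by omega
  exact_mod_cast this

lemma sb_strictMon (n : ℕ) : ∀ j k, j < k → k ≤ 2^n → sb n j < sb n k := by
  intro j k
  induction k with
  | zero => omega
  | succ k ih =>
    intro hjk hk
    rcases Nat.lt_or_ge j k with h | h
    · exact lt_trans (ih h (by omega)) (sb_lt_succ n k (by omega))
    · have : j = k := by omega
      subst this
      exact sb_lt_succ n j (by omega)

lemma sbNew_mem_pos_lt_one {n : ℕ} (hn : 1 ≤ n) {r : ℚ} (hr : r ∈ sbNew n) :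
    0 < r ∧ r < 1 := by
  simp only [sbNew, Finset.mem_image, Finset.mem_filter, Finset.mem_range] at hr
  obtain ⟨j, ⟨hj1, hj2⟩, rfl⟩ := hr
  constructor
  · have := sb_strictMon n 0 j (by omega) (by omega)
    rwa [sb_zero] at this
  · have := sb_strictMon n j (2^n) (by omega) le_rfl
    rwa [sb_top] at this

lemma rat_num_den_of {a b : ℤ} (hb : 0 < b) (hcop : IsCoprime a b) :
    ((a : ℚ)/(b : ℚ)).num = a ∧ (((a : ℚ)/(b : ℚ)).den : ℤ) = b := by
  have h : Nat.Coprime a.natAbs b.natAbs := Int.isCoprime_iff_gcd_eq_one.mp hcop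
  exact ⟨Rat.num_div_eq_of_coprime hb h, Rat.den_div_eq_of_coprime hb h⟩

lemma rat_cop (r : ℚ) : IsCoprime r.num (r.den : ℤ) := by
  apply Int.isCoprime_iff_gcd_eq_one.mpr
  simpa [Int.gcd] using r.reduced

lemma phiF_num_den {r : ℚ} (h0 : 0 ≤ r) (h1 : r ≤ 1) :
    (phiF r).num = (r.den : ℤ) ∧ ((phiF r).den : ℤ) = 2 * r.den - r.num := by
  set p := r.num with hp
  set q := (r.den : ℤ) with hq
  have hqpos : (0:ℤ) < q := by rw [hq]; exact_mod_cast r.pos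
  have hple : p ≤ q := num_le_den_of_le_one h1
  have hppos : 0 ≤ p := num_nonneg_of_nonneg h0
  have hdpos : (0:ℤ) < 2*q - p := by omega
  have hcop : IsCoprime q (2*q - p) := by
    obtain ⟨u, v, huv⟩ := rat_cop r
    exact ⟨v + 2*u, -u, by linear_combination huv⟩
  have hval : phiF r = (q : ℚ) / ((2*q - p : ℤ) : ℚ) := by
    have hr : r = (p:ℚ)/(q:ℚ) := (Rat.num_div_den r).symm
    have hq0 : (q:ℚ) ≠ 0 := by exact_mod_cast hqpos.ne'
    have h2r : (2:ℚ) - r = ((2*q - p : ℤ):ℚ)/(q:ℚ) := by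
      rw [hr]; push_cast; field_simp
    rw [phiF, h2r, one_div_div]
  rw [hval]
  exact rat_num_den_of hdpos hcop

lemma mediant_eq_div' (a b : ℚ) :
    mediant a b = ((a.num + b.num : ℤ) : ℚ) / (((a.den : ℤ) + (b.den : ℤ) : ℤ) : ℚ) := by
  rw [mediant_eq_div]; norm_cast

lemma phiF_div (N D : ℤ) (hD : 0 < D) (hN : N ≤ D) :
    phiF ((N:ℚ)/(D:ℚ)) = ((D:ℤ):ℚ)/((2*D - N : ℤ):ℚ) := by
  have hD0 : (D:ℚ) ≠ 0 := by exact_mod_cast hD.ne'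
  have h2 : ((2*D - N : ℤ):ℚ) ≠ 0 := by
    have : (0:ℤ) < 2*D - N := by omega
    exact_mod_cast this.ne'
  rw [phiF]
  rw [show (2:ℚ) - (N:ℚ)/(D:ℚ) = ((2*D - N : ℤ):ℚ)/((D:ℤ):ℚ) by push_cast; field_simp]
  rw [one_div_div]

lemma phiG_div (N D : ℤ) (hD : 0 < D) (hN : 0 ≤ N) :
    phiG ((N:ℚ)/(D:ℚ)) = ((N:ℤ):ℚ)/((D + N : ℤ):ℚ) := by
  have hD0 : (D:ℚ) ≠ 0 := by exact_mod_cast hD.ne'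
  have h2 : ((D + N : ℤ):ℚ) ≠ 0 := by
    have : (0:ℤ) < D + N := by omega
    exact_mod_cast this.ne'
  rw [phiG]
  rw [show (1:ℚ) + (N:ℚ)/(D:ℚ) = ((D + N : ℤ):ℚ)/((D:ℤ):ℚ) by push_cast; field_simp]
  push_cast
  rw [div_div_div_eq, mul_comm (D:ℚ) ((D:ℚ)+(N:ℚ)), mul_div_mul_right _ _ hD0]

lemma oneSub_div (N D : ℤ) (hD : 0 < D) :
    (1:ℚ) - (N:ℚ)/(D:ℚ) = ((D - N : ℤ):ℚ)/((D:ℤ):ℚ) := by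
  have hD0 : (D:ℚ) ≠ 0 := by exact_mod_cast hD.ne'
  push_cast; field_simp

lemma phiG_num_den {r : ℚ} (h0 : 0 ≤ r) :
    (phiG r).num = r.num ∧ ((phiG r).den : ℤ) = (r.den : ℤ) + r.num := by
  set p := r.num with hp
  set q := (r.den : ℤ) with hq
  have hqpos : (0:ℤ) < q := by rw [hq]; exact_mod_cast r.pos
  have hppos : 0 ≤ p := num_nonneg_of_nonneg h0
  have hdpos : (0:ℤ) < q + p := by omega
  have hcop : IsCoprime p (q + p) := by
    obtain ⟨u, v, huv⟩ := rat_cop r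
    exact ⟨u - v, v, by linear_combination huv⟩
  have hval : phiG r = (p : ℚ) / ((q + p : ℤ) : ℚ) := by
    have hr : r = (p:ℚ)/(q:ℚ) := (Rat.num_div_den r).symm
    rw [hr]
    exact phiG_div p q hqpos hppos
  rw [hval]
  exact rat_num_den_of hdpos hcop

lemma phiF_mediant {a b : ℚ} (ha0 : 0 ≤ a) (ha1 : a ≤ 1) (hb0 : 0 ≤ b) (hb1 : b ≤ 1) :
    phiF (mediant a b) = mediant (phiF a) (phiF b) := by
  obtain ⟨fan, fad⟩ := phiF_num_den ha0 ha1
  obtain ⟨fbn, fbd⟩ := phiF_num_den hb0 hb1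
  have hD : (0:ℤ) < (a.den:ℤ) + (b.den:ℤ) := by positivity
  have hN : a.num + b.num ≤ (a.den:ℤ) + (b.den:ℤ) :=
    add_le_add (num_le_den_of_le_one ha1) (num_le_den_of_le_one hb1)
  rw [mediant_eq_div' a b, phiF_div _ _ hD hN, mediant_eq_div' (phiF a) (phiF b),
    fan, fbn, fad, fbd]
  push_cast
  congr 1
  ring

lemma phiG_mediant {a b : ℚ} (ha0 : 0 ≤ a) (hb0 : 0 ≤ b) :
    phiG (mediant a b) = mediant (phiG a) (phiG b) := by
  obtain ⟨gan, gad⟩ := phiG_num_den ha0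
  obtain ⟨gbn, gbd⟩ := phiG_num_den hb0
  have hD : (0:ℤ) < (a.den:ℤ) + (b.den:ℤ) := by positivity
  have hN : (0:ℤ) ≤ a.num + b.num :=
    add_nonneg (num_nonneg_of_nonneg ha0) (num_nonneg_of_nonneg hb0)
  rw [mediant_eq_div' a b, phiG_div _ _ hD hN, mediant_eq_div' (phiG a) (phiG b),
    gan, gbn, gad, gbd]
  push_cast
  congr 1
  ring

lemma sb_upper : ∀ n j, j ≤ 2^n → sb (n+1) (2^n + j) = phiF (sb n j) := by
  intro n
  induction n with
  | zero => intro j hj; interval_cases j <;> norm_num [sb, phiF, phiG, mediant]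
  | succ n ih =>
    intro j hj
    rcases Nat.even_or_odd j with ⟨k, hk⟩ | ⟨k, hk⟩
    · have hk2 : k ≤ 2^n := by rw [pow_succ] at hj; omega
      have e1 : 2^(n+1) + j = 2*(2^n + k) := by rw [pow_succ]; omega
      have e2 : j = 2*k := by omega
      rw [e1, sb_succ_even, ih k hk2, e2, sb_succ_even]
    · have hk2 : k + 1 ≤ 2^n := by rw [pow_succ] at hj; omega
      have e1 : 2^(n+1) + j = 2*(2^n + k) + 1 := by rw [pow_succ]; omega
      have e2 : j = 2*k + 1 := by omega
      rw [e1, sb_succ_odd, show 2^n + k + 1 = 2^n + (k+1) by omega,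
        ih k (by omega), ih (k+1) hk2, e2, sb_succ_odd]
      exact (phiF_mediant (sb_bounds n k).1 (sb_bounds n k).2
        (sb_bounds n (k+1)).1 (sb_bounds n (k+1)).2).symm

lemma sb_lower : ∀ n j, j ≤ 2^n → sb (n+1) j = phiG (sb n j) := by
  intro n
  induction n with
  | zero => intro j hj; interval_cases j <;> norm_num [sb, phiF, phiG, mediant]
  | succ n ih =>
    intro j hj
    rcases Nat.even_or_odd j with ⟨k, hk⟩ | ⟨k, hk⟩
    · have hk2 : k ≤ 2^n := by rw [pow_succ] at hj; omega
      have e2 : j = 2*k := by omega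
      rw [e2, sb_succ_even, ih k hk2, sb_succ_even]
    · have hk2 : k + 1 ≤ 2^n := by rw [pow_succ] at hj; omega
      have e2 : j = 2*k + 1 := by omega
      rw [e2, sb_succ_odd, ih k (by omega), ih (k+1) hk2, sb_succ_odd]
      exact (phiG_mediant (sb_bounds n k).1 (sb_bounds n (k+1)).1).symm

lemma one_sub_num_den {r : ℚ} (h0 : 0 ≤ r) (h1 : r ≤ 1) :
    (1 - r).num = (r.den : ℤ) - r.num ∧ ((1 - r).den : ℤ) = (r.den : ℤ) := by
  set p := r.num with hp
  set q := (r.den : ℤ) with hq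
  have hqpos : (0:ℤ) < q := by rw [hq]; exact_mod_cast r.pos
  have hcop : IsCoprime (q - p) q := by
    obtain ⟨u, v, huv⟩ := rat_cop r
    exact ⟨-u, u + v, by linear_combination huv⟩
  have hval : 1 - r = ((q - p : ℤ) : ℚ) / ((q : ℤ) : ℚ) := by
    have hr : r = (p:ℚ)/(q:ℚ) := (Rat.num_div_den r).symm
    rw [hr]; exact oneSub_div p q hqpos
  rw [hval]
  exact rat_num_den_of hqpos hcop

lemma mediant_one_sub {a b : ℚ} (ha0 : 0 ≤ a) (ha1 : a ≤ 1) (hb0 : 0 ≤ b) (hb1 : b ≤ 1) :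
    mediant (1 - b) (1 - a) = 1 - mediant a b := by
  obtain ⟨san, sad⟩ := one_sub_num_den ha0 ha1
  obtain ⟨sbn, sbd⟩ := one_sub_num_den hb0 hb1
  have hD : (0:ℤ) < (b.den:ℤ) + (a.den:ℤ) := by positivity
  rw [mediant_eq_div' (1-b) (1-a), san, sbn, sad, sbd,
    mediant_eq_div' a b, oneSub_div _ _ (by positivity)]
  push_cast
  congr 1 <;> ring

lemma sb_symm : ∀ n j, j ≤ 2^n → sb n (2^n - j) = 1 - sb n j := by
  intro n
  induction n with
  | zero => intro j hj; interval_cases j <;> norm_num [sb]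
  | succ n ih =>
    intro j hj
    rcases Nat.even_or_odd j with ⟨k, hk⟩ | ⟨k, hk⟩
    · have hk2 : k ≤ 2^n := by rw [pow_succ] at hj; omega
      have e1 : 2^(n+1) - j = 2*(2^n - k) := by rw [pow_succ]; omega
      have e2 : j = 2*k := by omega
      rw [e1, sb_succ_even, ih k hk2, e2, sb_succ_even]
    · have hk2 : k + 1 ≤ 2^n := by rw [pow_succ] at hj; omega
      have e1 : 2^(n+1) - j = 2*(2^n - (k+1)) + 1 := by rw [pow_succ]; omega
      have e2 : j = 2*k + 1 := by omega
      rw [e1, sb_succ_odd, show 2^n - (k+1) + 1 = 2^n - k by omega,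
        ih (k+1) hk2, ih k (by omega), e2, sb_succ_odd]
      exact mediant_one_sub (sb_bounds n k).1 (sb_bounds n k).2
        (sb_bounds n (k+1)).1 (sb_bounds n (k+1)).2

lemma sbNew_symm {n : ℕ} (hn : 1 ≤ n) {r : ℚ} (hr : r ∈ sbNew n) : 1 - r ∈ sbNew n := by
  simp only [sbNew, Finset.mem_image, Finset.mem_filter, Finset.mem_range] at hr ⊢
  obtain ⟨j, ⟨hj1, hj2⟩, rfl⟩ := hr
  have h2 : 2^n % 2 = 0 := by
    have : (2:ℕ) ∣ 2^n := dvd_pow_self 2 (by omega)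
    omega
  refine ⟨2^n - j, ⟨by omega, by omega⟩, ?_⟩
  exact sb_symm n j (by omega)

lemma sbNew_succ {n : ℕ} (hn : 1 ≤ n) :
    sbNew (n+1) = (sbNew n).image phiG ∪ (sbNew n).image phiF := by
  have h2 : 2^n % 2 = 0 := by
    have : (2:ℕ) ∣ 2^n := dvd_pow_self 2 (by omega)
    omega
  ext s
  simp only [sbNew, Finset.mem_union, Finset.mem_image, Finset.mem_filter, Finset.mem_range]
  constructor
  · rintro ⟨j, ⟨hj1, hj2⟩, rfl⟩
    rcases Nat.lt_or_ge j (2^n) with h | h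
    · exact Or.inl ⟨sb n j, ⟨j, ⟨h, hj2⟩, rfl⟩, (sb_lower n j (by omega)).symm⟩
    · refine Or.inr ⟨sb n (j - 2^n), ⟨j - 2^n, ⟨by rw [pow_succ] at hj1; omega, by omega⟩, rfl⟩, ?_⟩
      rw [← sb_upper n (j - 2^n) (by rw [pow_succ] at hj1; omega),
        show 2^n + (j - 2^n) = j by omega]
  · rintro (⟨r, ⟨j, ⟨hj1, hj2⟩, rfl⟩, rfl⟩ | ⟨r, ⟨j, ⟨hj1, hj2⟩, rfl⟩, rfl⟩)
    · exact ⟨j, ⟨by rw [pow_succ]; omega, hj2⟩, sb_lower n j (by omega)⟩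
    · exact ⟨2^n + j, ⟨by rw [pow_succ]; omega, by omega⟩, sb_upper n j (by omega)⟩

noncomputable def P (r : ℚ) (x : ℝ) : ℝ :=
  1 / ((r.den : ℝ) - (r.num : ℝ) * x) ^ 2 + 1 / ((r.den : ℝ) - (r.num : ℝ) * (1 - x)) ^ 2

lemma div_sq_key {A D E : ℝ} (hE : E ≠ 0) (h : A * E = D) : (1/A^2)/E^2 = 1/D^2 := by
  rw [div_div, ← mul_pow, h]

lemma real_key (p q : ℝ) (x : ℝ) (hx1 : 1/2 ≤ x) (hx2 : x ≤ 1) :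
    (1/(q - p * (1/(2 - x)))^2 + 1/(q - p*(1 - 1/(2 - x)))^2) / (2 - x)^2
      + (1/(q - p * (1/(1 + x)))^2 + 1/(q - p*(1 - 1/(1 + x)))^2) / (1 + x)^2
    = (1/((2*q - p) - q*x)^2 + 1/((2*q - p) - q*(1 - x))^2)
      + (1/((2*q - p) - (q - p)*x)^2 + 1/((2*q - p) - (q - p)*(1 - x))^2) := by
  have h2x : (2:ℝ) - x ≠ 0 := by intro h; nlinarith
  have h1x : (1:ℝ) + x ≠ 0 := by intro h; nlinarith
  rw [add_div, add_div]
  rw [div_sq_key h2x (show (q - p * (1/(2 - x))) * (2 - x) = (2*q - p) - q*x by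
      field_simp; ring)]
  rw [div_sq_key h2x (show (q - p*(1 - 1/(2 - x))) * (2 - x) = (2*q - p) - (q - p)*x by
      field_simp; ring)]
  rw [div_sq_key h1x (show (q - p * (1/(1 + x))) * (1 + x) = (2*q - p) - q*(1 - x) by
      field_simp; ring)]
  rw [div_sq_key h1x (show (q - p*(1 - 1/(1 + x))) * (1 + x) = (2*q - p) - (q - p)*(1 - x) by
      field_simp; ring)]
  ring

lemma key_elem {r : ℚ} (h0 : 0 < r) (h1 : r < 1) (x : ℝ) (hx1 : 1/2 ≤ x) (hx2 : x ≤ 1) :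
    P r (1/(2 - x)) / (2 - x)^2 + P r (1/(1 + x)) / (1 + x)^2
      = P (phiF r) x + P (phiG (1 - r)) x := by
  obtain ⟨fn, fd⟩ := phiF_num_den h0.le h1.le
  obtain ⟨sn, sd⟩ := one_sub_num_den h0.le h1.le
  obtain ⟨gn, gd⟩ := phiG_num_den (r := 1 - r) (by linarith)
  rw [sn] at gn
  rw [sd, sn] at gd
  have fnr : ((phiF r).num : ℝ) = (r.den : ℝ) := by exact_mod_cast congrArg (Int.cast : ℤ → ℝ) fn
  have fdr : ((phiF r).den : ℝ) = 2*(r.den : ℝ) - (r.num : ℝ) := by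
    have := congrArg (Int.cast : ℤ → ℝ) fd; push_cast at this; linarith
  have gnr : ((phiG (1-r)).num : ℝ) = (r.den : ℝ) - (r.num : ℝ) := by
    have := congrArg (Int.cast : ℤ → ℝ) gn; push_cast at this; linarith
  have gdr : ((phiG (1-r)).den : ℝ) = 2*(r.den : ℝ) - (r.num : ℝ) := by
    have := congrArg (Int.cast : ℤ → ℝ) gd; push_cast at this; linarith
  unfold P
  rw [fnr, fdr, gnr, gdr]
  have := real_key (r.num : ℝ) (r.den : ℝ) x hx1 hx2
  linarith [this]

lemma phiF_gt_half {r : ℚ} (h0 : 0 < r) (h1 : r < 1) : 1/2 < phiF r := by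
  rw [phiF, lt_div_iff₀ (by linarith)]
  linarith

lemma phiG_lt_half {r : ℚ} (h0 : 0 < r) (h1 : r < 1) : phiG r < 1/2 := by
  rw [phiG, div_lt_iff₀ (by linarith)]
  linarith

lemma sbNew_one : sbNew 1 = {(1:ℚ)/2} := by
  have h : ((Finset.range 2).filter (fun j => j % 2 = 1)) = {1} := by decide
  rw [sbNew, pow_one, h, Finset.image_singleton]
  norm_num [sb, mediant]

lemma half_num : ((1:ℚ)/2).num = 1 ∧ (((1:ℚ)/2).den : ℤ) = 2 := by
  have := rat_num_den_of (a := 1) (b := 2) (by norm_num) isCoprime_one_left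
  norm_num at this ⊢

theorem main_sum : ∀ n, 1 ≤ n → ∀ x : ℝ, 1/2 ≤ x → x ≤ 1 →
    (Tplus^[n] (fun _ => 1)) x = ∑ r ∈ sbNew n, P r x := by
  intro n hn
  induction n, hn using Nat.le_induction with
  | base =>
    intro x hx1 hx2
    rw [Function.iterate_one, sbNew_one, Finset.sum_singleton, Tplus, P,
      half_num.1, show (((1:ℚ)/2).den : ℝ) = 2 by exact_mod_cast half_num.2]
    push_cast
    rw [show (2:ℝ) - 1*(1-x) = 1 + x by ring, show (2:ℝ) - 1*x = 2 - x by ring]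
  | succ n hn ih =>
    intro x hx1 hx2
    have hy1a : (1:ℝ)/2 ≤ 1/(2 - x) := by
      rw [div_le_div_iff₀ (by norm_num) (by linarith)]; linarith
    have hy1b : 1/(2 - x) ≤ 1 := by
      rw [div_le_one (by linarith)]; linarith
    have hy2a : (1:ℝ)/2 ≤ 1/(1 + x) := by
      rw [div_le_div_iff₀ (by norm_num) (by linarith)]; linarith
    have hy2b : 1/(1 + x) ≤ 1 := by
      rw [div_le_one (by linarith)]; linarith
    rw [Function.iterate_succ_apply', Tplus, ih _ hy1a hy1b, ih _ hy2a hy2b,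
      Finset.sum_div, Finset.sum_div, ← Finset.sum_add_distrib]
    have step1 : ∑ r ∈ sbNew n, (P r (1/(2-x)) / (2-x)^2 + P r (1/(1+x)) / (1+x)^2)
        = ∑ r ∈ sbNew n, (P (phiF r) x + P (phiG (1 - r)) x) := by
      refine Finset.sum_congr rfl fun r hr => ?_
      obtain ⟨h0, h1⟩ := sbNew_mem_pos_lt_one hn hr
      exact key_elem h0 h1 x hx1 hx2
    rw [step1, Finset.sum_add_distrib]
    have step2 : ∑ r ∈ sbNew n, P (phiG (1 - r)) x = ∑ r ∈ sbNew n, P (phiG r) x := by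
      refine Finset.sum_nbij' (fun r => 1 - r) (fun r => 1 - r) ?_ ?_ ?_ ?_ ?_
      · intro a ha; exact sbNew_symm hn ha
      · intro a ha; exact sbNew_symm hn ha
      · intro a _; ring
      · intro a _; ring
      · intro a _; norm_num
    rw [step2]
    have injF : ∀ a ∈ sbNew n, ∀ b ∈ sbNew n, phiF a = phiF b → a = b := by
      intro a ha b hb h
      obtain ⟨ha0, ha1⟩ := sbNew_mem_pos_lt_one hn ha
      obtain ⟨hb0, hb1⟩ := sbNew_mem_pos_lt_one hn hb
      rw [phiF, phiF, div_eq_div_iff (by linarith) (by linarith)] at h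
      linarith
    have injG : ∀ a ∈ sbNew n, ∀ b ∈ sbNew n, phiG a = phiG b → a = b := by
      intro a ha b hb h
      obtain ⟨ha0, ha1⟩ := sbNew_mem_pos_lt_one hn ha
      obtain ⟨hb0, hb1⟩ := sbNew_mem_pos_lt_one hn hb
      rw [phiG, phiG, div_eq_div_iff (by linarith) (by linarith)] at h
      nlinarith
    have hdisj : Disjoint ((sbNew n).image phiG) ((sbNew n).image phiF) := by
      rw [Finset.disjoint_left]
      intro s hsG hsF
      obtain ⟨a, ha, rfl⟩ := Finset.mem_image.mp hsG
      obtain ⟨b, hb, hba⟩ := Finset.mem_image.mp hsF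
      obtain ⟨ha0, ha1⟩ := sbNew_mem_pos_lt_one hn ha
      obtain ⟨hb0, hb1⟩ := sbNew_mem_pos_lt_one hn hb
      have := phiG_lt_half ha0 ha1
      have := phiF_gt_half hb0 hb1
      rw [hba] at this
      linarith
    rw [sbNew_succ hn, Finset.sum_union hdisj, Finset.sum_image injG, Finset.sum_image injF]
    ring

/-- With `ψ_n = (T₊)^n 1`, for every `n ≥ 1` and `x ∈ [1/2,1]`:
`ψ_n(x) = Σ_{p/q ∈ W_n} ( 1/(q−px)² + 1/(q−p(1−x))² )`,
where `W_n` is the `n`-th layer of new Stern–Brocot fractions in lowest terms. -/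
theorem Tplus_iterate_one_eq (n : ℕ) (hn : 1 ≤ n) (x : ℝ)
    (hx : x ∈ Set.Icc (1 / 2 : ℝ) 1) :
    (Tplus^[n] (fun _ => 1)) x =
      ∑ r ∈ sbNew n,
        (1 / ((r.den : ℝ) - (r.num : ℝ) * x) ^ 2 +
          1 / ((r.den : ℝ) - (r.num : ℝ) * (1 - x)) ^ 2) := by
  obtain ⟨hx1, hx2⟩ := hx
  have h := main_sum n hn x hx1 hx2
  simpa [P] using h
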